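/- In X = ℝ², let A = {(ξ, η) : ξ² + (η − 1)² ≤ 1} (the closed disk of radius 1 centered at (0,1)) and B = ℝ × {0}, and let v = (1, 0). Define the cyclic Dykstra sequences by b_0 = v, p_0 = 0, a_{k+1} = P_A(b_k + p_k), p_{k+1} = b_k + p_k − a_{k+1}, b_{k+1} = P_B(a_{k+1}); and the baD–R sequences by x_0 = v, y_k = P_B x_k, x_{k+1} = x_k − y_k + P_A(y_k + (v − x_k)/2). Then b_1 = y_1 = (√2/2, 0), while b_2 = (2/√(22 − 8√2), 0) and y_2 = ((√2 + 2)/(2√(11 − 2√2)), 0); in particular b_2 ≠ y_2. -/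

import Mathlib

noncomputable def pt (a b : ℝ) : EuclideanSpace ℝ (Fin 2) :=
  (WithLp.equiv 2 (Fin 2 → ℝ)).symm ![a, b]

@[simp] lemma pt_apply0 (a b : ℝ) : pt a b 0 = a := rfl
@[simp] lemma pt_apply1 (a b : ℝ) : pt a b 1 = b := rfl

lemma pt_ext (z : EuclideanSpace ℝ (Fin 2)) : z = pt (z 0) (z 1) := by
  ext i; fin_cases i <;> rfl

@[simp] lemma pt_add (a b c d : ℝ) : pt a b + pt c d = pt (a+c) (b+d) := by
  ext i; fin_cases i <;> rfl

@[simp] lemma pt_sub (a b c d : ℝ) : pt a b - pt c d = pt (a-c) (b-d) := by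
  ext i; fin_cases i <;> rfl

@[simp] lemma pt_smul (r a b : ℝ) : r • pt a b = pt (r*a) (r*b) := by
  ext i; fin_cases i <;> rfl

@[simp] lemma pt_zero : pt 0 0 = 0 := by
  ext i; fin_cases i <;> rfl

lemma normsq (z : EuclideanSpace ℝ (Fin 2)) : ‖z‖^2 = (z 0)^2 + (z 1)^2 := by
  rw [EuclideanSpace.norm_eq, Real.sq_sqrt (by positivity)]
  simp [Fin.sum_univ_two, sq_abs]

lemma key (a0 a1 s0 s1 r : ℝ) (hr : r^2 = a0^2+a1^2) (hr1 : 1 < r)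
    (h1 : s0^2+s1^2 ≤ 1) (h2 : (a0-s0)^2+(a1-s1)^2 ≤ (r-1)^2) :
    s0 = a0/r ∧ s1 = a1/r := by
  have hrne : r ≠ 0 := by linarith
  have hmain : (r*s0 - a0)^2 + (r*s1 - a1)^2 ≤ 0 := by
    nlinarith [sq_nonneg (s0^2+s1^2-1), mul_pos (by linarith : (0:ℝ) < r) (by linarith : (0:ℝ) < r - 1)]
  constructor <;> [skip; skip] <;>
  · field_simp
    nlinarith [sq_nonneg (r*s0 - a0), sq_nonneg (r*s1 - a1)]

lemma PB_eq (PB : EuclideanSpace ℝ (Fin 2) → EuclideanSpace ℝ (Fin 2))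
    (hPB : ∀ z, PB z ∈ {z : EuclideanSpace ℝ (Fin 2) | z 1 = 0} ∧
      ∀ b ∈ {z : EuclideanSpace ℝ (Fin 2) | z 1 = 0}, ‖z - PB z‖ ≤ ‖z - b‖)
    (z : EuclideanSpace ℝ (Fin 2)) : PB z = pt (z 0) 0 := by
  obtain ⟨hmem, hmin⟩ := hPB z
  have hq : (pt (z 0) 0 : EuclideanSpace ℝ (Fin 2)) ∈ {z : EuclideanSpace ℝ (Fin 2) | z 1 = 0} := rfl
  have h := hmin _ hq
  have h2 : ‖z - PB z‖^2 ≤ ‖z - pt (z 0) 0‖^2 := by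
    apply pow_le_pow_left₀ (norm_nonneg _) h
  rw [normsq, normsq] at h2
  simp only [PiLp.sub_apply] at h2
  have hm : PB z 1 = 0 := hmem
  rw [hm] at h2
  simp only [pt_apply0, pt_apply1, sub_zero, sub_self] at h2
  have h0 : (z 0 - PB z 0)^2 ≤ 0 := by nlinarith
  have h0' : PB z 0 = z 0 := by nlinarith [sq_nonneg (z 0 - PB z 0)]
  rw [pt_ext (PB z), h0', hm]

lemma PA_eq (PA : EuclideanSpace ℝ (Fin 2) → EuclideanSpace ℝ (Fin 2))
    (hPA : ∀ z, PA z ∈ {z : EuclideanSpace ℝ (Fin 2) | (z 0)^2 + (z 1 - 1)^2 ≤ 1} ∧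
      ∀ a ∈ {z : EuclideanSpace ℝ (Fin 2) | (z 0)^2 + (z 1 - 1)^2 ≤ 1}, ‖z - PA z‖ ≤ ‖z - a‖)
    (z : EuclideanSpace ℝ (Fin 2)) (hz : 1 < (z 0)^2 + (z 1 - 1)^2) :
    PA z = pt (z 0 / Real.sqrt ((z 0)^2 + (z 1 - 1)^2))
      (1 + (z 1 - 1) / Real.sqrt ((z 0)^2 + (z 1 - 1)^2)) := by
  obtain ⟨hmem, hmin⟩ := hPA z
  set r := Real.sqrt ((z 0)^2 + (z 1 - 1)^2) with hrdef
  have hr2 : r^2 = (z 0)^2 + (z 1 - 1)^2 := Real.sq_sqrt (by positivity)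
  have hr1 : 1 < r := by
    nlinarith [Real.sqrt_nonneg ((z 0)^2 + (z 1 - 1)^2)]
  have hrne : r ≠ 0 := by linarith
  -- the candidate point is in A
  have hq : (pt (z 0 / r) (1 + (z 1 - 1)/r) : EuclideanSpace ℝ (Fin 2)) ∈
      {z : EuclideanSpace ℝ (Fin 2) | (z 0)^2 + (z 1 - 1)^2 ≤ 1} := by
    simp only [Set.mem_setOf_eq, pt_apply0, pt_apply1]
    have : (z 0 / r)^2 + (1 + (z 1 - 1)/r - 1)^2 = ((z 0)^2 + (z 1 - 1)^2)/r^2 := by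
      field_simp
      ring
    rw [this, hr2, div_self (by positivity)]
  have hnq : ‖z - pt (z 0 / r) (1 + (z 1 - 1)/r)‖^2 = (r-1)^2 := by
    rw [normsq]
    simp only [PiLp.sub_apply, pt_apply0, pt_apply1]
    field_simp
    linear_combination (-(r-1)^2) * hr2
  have h := hmin _ hq
  have h2 : ‖z - PA z‖^2 ≤ (r-1)^2 := by
    rw [← hnq]; exact pow_le_pow_left₀ (norm_nonneg _) h 2
  rw [normsq] at h2
  simp only [PiLp.sub_apply] at h2
  have hmem' : (PA z 0)^2 + (PA z 1 - 1)^2 ≤ 1 := hmem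
  have hk := key (z 0) (z 1 - 1) (PA z 0) (PA z 1 - 1) r hr2 hr1 hmem' (by nlinarith)
  have h1' : PA z 1 = 1 + (z 1 - 1)/r := by linarith [hk.2]
  rw [pt_ext (PA z), hk.1, h1']

lemma pt_congr {a b c d : ℝ} (h1 : a = c) (h2 : b = d) : pt a b = pt c d := by rw [h1, h2]

set_option maxHeartbeats 1000000

/-- In ℝ², with `A` the closed unit disk centered at `(0,1)` and `B = ℝ × {0}`,
starting at `v = (1,0)`, the cyclic Dykstra iterates `b_k` and the baD–R
iterates `y_k = P_B x_k` satisfy `b_1 = y_1 = (√2/2, 0)`, while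
`b_2 = (2/√(22-8√2), 0) ≠ ((√2+2)/(2√(11-2√2)), 0) = y_2`. -/
theorem stmt_14
    (A B : Set (EuclideanSpace ℝ (Fin 2)))
    (hA : A = {z | (z 0) ^ 2 + (z 1 - 1) ^ 2 ≤ 1})
    (hB : B = {z | z 1 = 0})
    (PA PB : EuclideanSpace ℝ (Fin 2) → EuclideanSpace ℝ (Fin 2))
    (hPA : ∀ z, PA z ∈ A ∧ ∀ a ∈ A, ‖z - PA z‖ ≤ ‖z - a‖)
    (hPB : ∀ z, PB z ∈ B ∧ ∀ b ∈ B, ‖z - PB z‖ ≤ ‖z - b‖)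
    (v : EuclideanSpace ℝ (Fin 2)) (hv : v = pt 1 0)
    (a b p : ℕ → EuclideanSpace ℝ (Fin 2))
    (hb0 : b 0 = v) (hp0 : p 0 = 0)
    (ha : ∀ k, a (k + 1) = PA (b k + p k))
    (hp : ∀ k, p (k + 1) = b k + p k - a (k + 1))
    (hb : ∀ k, b (k + 1) = PB (a (k + 1)))
    (x y : ℕ → EuclideanSpace ℝ (Fin 2))
    (hx0 : x 0 = v) (hy : ∀ k, y k = PB (x k))
    (hx : ∀ k, x (k + 1) = x k - y k + PA (y k + (2 : ℝ)⁻¹ • (v - x k))) :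
    b 1 = pt (Real.sqrt 2 / 2) 0 ∧ y 1 = pt (Real.sqrt 2 / 2) 0 ∧
      b 2 = pt (2 / Real.sqrt (22 - 8 * Real.sqrt 2)) 0 ∧
      y 2 = pt ((Real.sqrt 2 + 2) / (2 * Real.sqrt (11 - 2 * Real.sqrt 2))) 0 ∧
      b 2 ≠ y 2 := by
  subst hA hB hv
  set s := Real.sqrt 2 with hsdef
  have hs2 : s^2 = 2 := Real.sq_sqrt (by norm_num)
  have hs0 : 0 < s := Real.sqrt_pos.mpr (by norm_num)
  have hsl : 1 < s := by nlinarith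
  have hsu : s < 3/2 := by nlinarith
  have hsne : s ≠ 0 := ne_of_gt hs0
  -- specialized projection formulas
  have PBf : ∀ ξ η : ℝ, PB (pt ξ η) = pt ξ 0 := by
    intro ξ η
    have := PB_eq PB hPB (pt ξ η)
    simpa using this
  have PAf : ∀ ξ η : ℝ, 1 < ξ^2 + (η-1)^2 →
      PA (pt ξ η) = pt (ξ / Real.sqrt (ξ^2 + (η-1)^2))
        (1 + (η-1) / Real.sqrt (ξ^2 + (η-1)^2)) := by
    intro ξ η h
    have := PA_eq PA hPA (pt ξ η) (by simpa using h)
    simpa using this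
  -- step 1
  have ha1 : a 1 = pt (1/s) (1 - 1/s) := by
    rw [ha 0, hb0, hp0, add_zero, PAf 1 0 (by norm_num)]
    have h2 : (1:ℝ)^2 + ((0:ℝ)-1)^2 = 2 := by norm_num
    rw [h2]
    exact pt_congr rfl (by ring)
  have h1s : 1/s = s/2 := by
    field_simp
    linarith [hs2]
  have hb1 : b 1 = pt (s/2) 0 := by
    rw [hb 0, ha1, PBf, h1s]
  -- p 1 and b 1 + p 1
  have hp1 : p 1 = pt (1 - 1/s) (1/s - 1) := by
    rw [hp 0, hb0, hp0, add_zero, ha1, pt_sub]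
    exact pt_congr (by ring) (by ring)
  have hsum1 : b 1 + p 1 = pt 1 (1/s - 1) := by
    rw [hb1, hp1, pt_add, h1s]
    exact pt_congr (by ring) (by ring)
  -- step 2 of Dykstra
  have hE2 : (1:ℝ)^2 + ((1/s - 1) - 1)^2 = (22 - 8*s)/4 := by
    field_simp
    linear_combination (8*s-2)*hs2
  have h22pos : (0:ℝ) < 22 - 8*s := by linarith
  have hsqrtE2 : Real.sqrt ((22 - 8*s)/4) = Real.sqrt (22 - 8*s) / 2 := by
    rw [show (22 - 8*s)/4 = (22-8*s) * (1/2)^2 by ring,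
      Real.sqrt_mul (le_of_lt h22pos), Real.sqrt_sq (by norm_num)]
    ring
  have hst22 : 0 < Real.sqrt (22 - 8*s) := Real.sqrt_pos.mpr h22pos
  have ha2 : a 2 = pt (2 / Real.sqrt (22 - 8*s))
      (1 + ((1/s - 1) - 1) / (Real.sqrt (22 - 8*s) / 2)) := by
    rw [ha 1, hsum1, PAf 1 (1/s - 1) (by rw [hE2]; linarith), hE2, hsqrtE2]
    exact pt_congr (by rw [div_div_eq_mul_div]; ring) rfl
  have hb2 : b 2 = pt (2 / Real.sqrt (22 - 8*s)) 0 := by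
    rw [hb 1, ha2, PBf]
  -- baD-R sequence
  have hy0 : y 0 = pt 1 0 := by rw [hy 0, hx0, PBf]
  have hx1 : x 1 = pt (1/s) (1 - 1/s) := by
    rw [hx 0, hx0, hy0]
    have harg : pt 1 0 + (2:ℝ)⁻¹ • ((pt 1 0 : EuclideanSpace ℝ (Fin 2)) - pt 1 0) =
        pt 1 0 := by
      rw [pt_sub, pt_smul, pt_add]
      exact pt_congr (by ring) (by ring)
    rw [harg, PAf 1 0 (by norm_num)]
    have h2 : (1:ℝ)^2 + ((0:ℝ)-1)^2 = 2 := by norm_num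
    rw [h2, pt_sub]
    rw [show (1:ℝ) - 1 = 0 by ring, show (0:ℝ) - 0 = 0 by ring, pt_zero, zero_add]
    exact pt_congr rfl (by ring)
  have hy1 : y 1 = pt (s/2) 0 := by rw [hy 1, hx1, PBf, h1s]
  -- step 2 of baD-R
  have hw : y 1 + (2:ℝ)⁻¹ • ((pt 1 0 : EuclideanSpace ℝ (Fin 2)) - x 1) =
      pt ((2 + s)/4) ((1/s - 1)/2) := by
    rw [hy1, hx1, pt_sub, pt_smul, pt_add]
    exact pt_congr (by rw [h1s]; ring) (by ring)
  have hE3 : ((2 + s)/4)^2 + ((1/s - 1)/2 - 1)^2 = (11 - 2*s)/4 := by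
    field_simp
    linear_combination (4*s^2 + 48*s - 8)*hs2
  have h11pos : (0:ℝ) < 11 - 2*s := by linarith
  have hsqrtE3 : Real.sqrt ((11 - 2*s)/4) = Real.sqrt (11 - 2*s) / 2 := by
    rw [show (11 - 2*s)/4 = (11-2*s) * (1/2)^2 by ring,
      Real.sqrt_mul (le_of_lt h11pos), Real.sqrt_sq (by norm_num)]
    ring
  have hst11 : 0 < Real.sqrt (11 - 2*s) := Real.sqrt_pos.mpr h11pos
  have hx2 : x 2 = x 1 - y 1 + pt ((2+s)/(2*Real.sqrt (11 - 2*s)))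
      (1 + ((1/s - 1)/2 - 1) / (Real.sqrt (11 - 2*s) / 2)) := by
    rw [hx 1, hw, PAf _ _ (by rw [hE3]; linarith), hE3, hsqrtE3]
    congr 1
    exact pt_congr (by rw [div_div_eq_mul_div]; ring) rfl
  have hy2 : y 2 = pt ((s + 2)/(2*Real.sqrt (11 - 2*s))) 0 := by
    rw [hy 2, hx2, hx1, hy1, pt_sub, h1s, pt_add, PBf]
    exact pt_congr (by ring) rfl
  refine ⟨by rw [hb1], by rw [hy1], hb2, hy2, ?_⟩
  rw [hb2, hy2]
  intro h
  have h0 : (2:ℝ) / Real.sqrt (22 - 8*s) = (s + 2)/(2*Real.sqrt (11 - 2*s)) := by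
    have := congrArg (fun z => z 0) h
    simpa using this
  set u := Real.sqrt (22 - 8*s)
  set t := Real.sqrt (11 - 2*s)
  have hu2 : u^2 = 22 - 8*s := Real.sq_sqrt (le_of_lt h22pos)
  have ht2 : t^2 = 11 - 2*s := Real.sq_sqrt (le_of_lt h11pos)
  have hcross : 4 * t = (s + 2) * u := by
    field_simp at h0
    linarith
  have hsq : (4*t)^2 = ((s+2)*u)^2 := by rw [hcross]
  nlinarith [hsq, hu2, ht2, hs2, hsu, hsl, mul_pos hst22 hst11]
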